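/- arXiv:1405.2414 — 3 statements merged into one kernel-verified Lean document; each statement's English description precedes it below -/
import Mathlib

section
/- Let m, n be nonnegative integers, w = v^d for a fixed integer d, and let {e_p}_{p>=0} be a sequence in Z[v^{±1}] satisfying e_p = \sum_{k=1}^{p} (-1)^{k-1} e_{p-k} [m+k-1 choose k]_w for all p > n. Then e_p = 0 for all p > n+m, and the polynomial \sum_{k=0}^{m} [m choose k]_w t^k divides \sum_{p=0}^{m+n} e_p t^p in Z[v^{±1}][t]. -/
open Finset

noncomputable section

/-- Field of rational functions over ℚ, containing `ℤ[w^{±1}]`. -/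
abbrev KK : Type := RatFunc ℚ

/-- The indeterminate `w`. -/
def wvar : KK := RatFunc.X

/-- The bar-invariant quantum integer `[n]_u = (u^n - u^{-n})/(u - u⁻¹)`. -/
def qint (u : KK) (n : ℤ) : KK := (u ^ n - u ^ (-n)) / (u - u⁻¹)

/-- The bar-invariant quantum binomial coefficient. -/
def qbinom (u : KK) (n : ℤ) (k : ℕ) : KK :=
  (∏ i ∈ Finset.range k, qint u (n - i)) / (∏ i ∈ Finset.range k, qint u ((i : ℤ) + 1))
lemma qint_zero (u : KK) : qint u 0 = 0 := by simp [qint]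

lemma qint_add (u : KK) (hu : u ≠ 0) (a b : ℤ) :
    qint u (a + b) = u ^ b * qint u a + u ^ (-a) * qint u b := by
  unfold qint
  rw [mul_div_assoc', mul_div_assoc', ← add_div]
  congr 1
  rw [zpow_add₀ hu, neg_add, zpow_add₀ hu]
  ring

lemma qbinom_zero_right (u : KK) (n : ℤ) : qbinom u n 0 = 1 := by simp [qbinom]

lemma qbinom_eq_zero (u : KK) (j k : ℕ) (h : j < k) : qbinom u (j : ℤ) k = 0 := by
  unfold qbinom
  rw [Finset.prod_eq_zero (Finset.mem_range.2 h) (by simp [qint_zero]), zero_div]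

lemma pascal (u : KK) (hu : u ≠ 0) (hq : ∀ j : ℕ, j ≠ 0 → qint u (j : ℤ) ≠ 0)
    (n : ℤ) (k : ℕ) :
    qbinom u n (k + 1) = u ^ (-((k : ℤ) + 1)) * qbinom u (n - 1) (k + 1)
      + u ^ (n - ((k : ℤ) + 1)) * qbinom u (n - 1) k := by
  have hk1 : qint u ((k : ℤ) + 1) ≠ 0 := by
    have := hq (k + 1) (Nat.succ_ne_zero k); push_cast at this; exact this
  have h3 : qbinom u (n - 1) k
      = ((∏ i ∈ Finset.range k, qint u (n - 1 - i)) * qint u ((k : ℤ) + 1)) /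
        (∏ i ∈ Finset.range (k + 1), qint u ((i : ℤ) + 1)) := by
    rw [qbinom, Finset.prod_range_succ, mul_div_mul_right _ _ hk1]
  rw [h3, qbinom, qbinom, mul_div_assoc', mul_div_assoc', ← add_div]
  congr 1
  rw [Finset.prod_range_succ' (fun i => qint u (n - i)) k,
    Finset.prod_range_succ (fun i : ℕ => qint u (n - 1 - i)) k]
  have hP : ∀ i ∈ Finset.range k,
      qint u (n - ((i : ℕ) + 1 : ℕ)) = qint u (n - 1 - i) :=
    fun i _ => congrArg (qint u) (by push_cast; ring)
  rw [Finset.prod_congr rfl hP]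
  have key : qint u n = u ^ (n - ((k : ℤ) + 1)) * qint u ((k : ℤ) + 1)
      + u ^ (-((k : ℤ) + 1)) * qint u (n - ((k : ℤ) + 1)) := by
    have h := qint_add u hu ((k : ℤ) + 1) (n - ((k : ℤ) + 1))
    rw [show ((k : ℤ) + 1) + (n - ((k : ℤ) + 1)) = n by ring] at h
    rw [h]
  have harg : n - 1 - (k : ℤ) = n - ((k : ℤ) + 1) := by ring
  simp only [Nat.cast_zero, sub_zero]
  rw [harg, key]
  ring
def Apow (u : KK) (m : ℕ) : PowerSeries KK :=
  PowerSeries.mk fun k => (-1 : KK) ^ k * qbinom u ((m : ℤ) + (k : ℤ) - 1) k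

def Bpoly (u : KK) (m : ℕ) : Polynomial KK :=
  ∑ k ∈ Finset.range (m + 1), Polynomial.C (qbinom u (m : ℤ) k) * Polynomial.X ^ k

lemma qbinom_nat_eq_zero (u : KK) (m k : ℕ) (h : m < k) : qbinom u (m : ℤ) k = 0 :=
  qbinom_eq_zero u m k h

lemma coeff_Bpoly (u : KK) (m k : ℕ) : (Bpoly u m).coeff k = qbinom u (m : ℤ) k := by
  rw [Bpoly, Polynomial.finset_sum_coeff]
  simp only [Polynomial.coeff_C_mul, Polynomial.coeff_X_pow, mul_ite, mul_one, mul_zero]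
  rw [Finset.sum_ite_eq (Finset.range (m + 1)) k]
  by_cases h : k ∈ Finset.range (m + 1)
  · simp [h]
  · rw [if_neg h]
    rw [Finset.mem_range, not_lt] at h
    exact (qbinom_nat_eq_zero u m k (by omega)).symm
lemma coeff_succ_aux (c : KK) (f : PowerSeries KK) (k : ℕ) :
    PowerSeries.coeff (k + 1) ((1 + PowerSeries.C c * PowerSeries.X) * f)
      = PowerSeries.coeff (k + 1) f + c * PowerSeries.coeff k f := by
  rw [show (1 + PowerSeries.C c * PowerSeries.X) * f
      = f + PowerSeries.C c * (PowerSeries.X * f) by ring]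
  rw [map_add, PowerSeries.coeff_C_mul, PowerSeries.coeff_succ_X_mul]

lemma coeff_zero_aux (c : KK) (f : PowerSeries KK) :
    PowerSeries.coeff 0 ((1 + PowerSeries.C c * PowerSeries.X) * f)
      = PowerSeries.coeff 0 f := by
  rw [show (1 + PowerSeries.C c * PowerSeries.X) * f
      = f + PowerSeries.C c * (PowerSeries.X * f) by ring]
  rw [map_add, PowerSeries.coeff_C_mul, PowerSeries.coeff_zero_X_mul, mul_zero, add_zero]
lemma Bstep (u : KK) (hu : u ≠ 0) (hq : ∀ j : ℕ, j ≠ 0 → qint u (j : ℤ) ≠ 0) (m : ℕ) :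
    ((Bpoly u (m + 1) : Polynomial KK) : PowerSeries KK)
      = (1 + PowerSeries.C (u ^ m) * PowerSeries.X)
        * PowerSeries.rescale u⁻¹ (Bpoly u m : PowerSeries KK) := by
  ext k
  cases k with
  | zero =>
      rw [coeff_zero_aux, PowerSeries.coeff_rescale, Polynomial.coeff_coe,
        Polynomial.coeff_coe, coeff_Bpoly, coeff_Bpoly, qbinom_zero_right, qbinom_zero_right]
      simp
  | succ k =>
      rw [Polynomial.coeff_coe, coeff_Bpoly, coeff_succ_aux, PowerSeries.coeff_rescale,
        PowerSeries.coeff_rescale, Polynomial.coeff_coe, Polynomial.coeff_coe,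
        coeff_Bpoly, coeff_Bpoly]
      have hp := pascal u hu hq ((m : ℤ) + 1) k
      rw [show ((m : ℤ) + 1 - 1) = (m : ℤ) by ring] at hp
      rw [show ((m + 1 : ℕ) : ℤ) = (m : ℤ) + 1 by omega, hp]
      have e1 : u ^ (-((k : ℤ) + 1)) = u⁻¹ ^ (k + 1) := by
        rw [inv_pow, ← zpow_natCast u (k + 1), ← zpow_neg]
        try congr 1
        try omega
      have e2 : u ^ ((m : ℤ) + 1 - ((k : ℤ) + 1)) = u ^ m * u⁻¹ ^ k := by
        rw [inv_pow, ← zpow_natCast u k, ← zpow_neg, ← zpow_natCast u m, ← zpow_add₀ hu]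
        try congr 1
        try omega
      rw [e1, e2]; ring

lemma Astep (u : KK) (hu : u ≠ 0) (hq : ∀ j : ℕ, j ≠ 0 → qint u (j : ℤ) ≠ 0) (m : ℕ) :
    (1 + PowerSeries.C (u ^ m) * PowerSeries.X) * Apow u (m + 1)
      = PowerSeries.rescale u⁻¹ (Apow u m) := by
  ext k
  cases k with
  | zero =>
      rw [coeff_zero_aux, PowerSeries.coeff_rescale]
      simp [Apow, qbinom_zero_right]
  | succ k =>
      rw [coeff_succ_aux, PowerSeries.coeff_rescale]
      simp only [Apow, PowerSeries.coeff_mk]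
      rw [show ((m + 1 : ℕ) : ℤ) + ((k + 1 : ℕ) : ℤ) - 1 = ((m : ℤ) + (k : ℤ) + 1) by omega,
        show ((m + 1 : ℕ) : ℤ) + (k : ℤ) - 1 = ((m : ℤ) + (k : ℤ)) by omega,
        show ((m : ℕ) : ℤ) + ((k + 1 : ℕ) : ℤ) - 1 = ((m : ℤ) + (k : ℤ)) by omega]
      have hp := pascal u hu hq ((m : ℤ) + (k : ℤ) + 1) k
      rw [show ((m : ℤ) + (k : ℤ) + 1 - 1) = ((m : ℤ) + (k : ℤ)) by ring] at hp
      have e1 : u ^ (-((k : ℤ) + 1)) = u⁻¹ ^ (k + 1) := by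
        rw [inv_pow, ← zpow_natCast u (k + 1), ← zpow_neg]
        try congr 1
        try omega
      have e3 : u ^ ((m : ℤ) + (k : ℤ) + 1 - ((k : ℤ) + 1)) = u ^ m := by
        rw [← zpow_natCast u m]
        try congr 1
        try omega
      rw [hp, e1, e3]; ring
lemma Apow_zero (u : KK) : Apow u 0 = 1 := by
  ext k
  cases k with
  | zero => simp [Apow, qbinom_zero_right]
  | succ k =>
      rw [PowerSeries.coeff_one]
      simp only [Apow, PowerSeries.coeff_mk, Nat.succ_ne_zero, if_false]
      rw [show ((0 : ℕ) : ℤ) + ((k + 1 : ℕ) : ℤ) - 1 = ((k : ℕ) : ℤ) by omega]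
      rw [qbinom_eq_zero u k (k + 1) (Nat.lt_succ_self k), mul_zero]

lemma Bpoly_zero (u : KK) : Bpoly u 0 = 1 := by
  rw [Bpoly]
  simp [qbinom_zero_right]

lemma ABone (u : KK) (hu : u ≠ 0) (hq : ∀ j : ℕ, j ≠ 0 → qint u (j : ℤ) ≠ 0) (m : ℕ) :
    Apow u m * (Bpoly u m : PowerSeries KK) = 1 := by
  induction m with
  | zero => rw [Apow_zero, Bpoly_zero]; simp
  | succ m ih =>
      rw [Bstep u hu hq m, show Apow u (m + 1)
          * ((1 + PowerSeries.C (u ^ m) * PowerSeries.X)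
            * PowerSeries.rescale u⁻¹ (Bpoly u m : PowerSeries KK))
          = ((1 + PowerSeries.C (u ^ m) * PowerSeries.X) * Apow u (m + 1))
            * PowerSeries.rescale u⁻¹ (Bpoly u m : PowerSeries KK) by ring,
        Astep u hu hq m, ← map_mul, ih, map_one]
lemma coeff_EA (u : KK) (m n : ℕ) (e : ℕ → KK)
    (hrec : ∀ p, n < p → e p = ∑ k ∈ Finset.Icc 1 p,
      (-1 : KK) ^ (k - 1) * e (p - k) * qbinom u ((m : ℤ) + (k : ℤ) - 1) k)
    (p : ℕ) (hp : n < p) :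
    PowerSeries.coeff p (PowerSeries.mk e * Apow u m) = 0 := by
  rw [PowerSeries.coeff_mul, Finset.Nat.sum_antidiagonal_eq_sum_range_succ_mk]
  simp only [PowerSeries.coeff_mk, Apow]
  rw [Finset.sum_range_succ]
  have hlast : e p * ((-1 : KK) ^ (p - p) * qbinom u ((m : ℤ) + ((p - p : ℕ) : ℤ) - 1) (p - p))
      = e p := by
    simp [Nat.sub_self, qbinom_zero_right]
  rw [hlast, hrec p hp, ← Finset.Ico_add_one_right_eq_Icc, Finset.sum_Ico_eq_sum_range]
  rw [show p + 1 - 1 = p from rfl]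
  rw [← Finset.sum_range_reflect
    (fun k => e k * ((-1 : KK) ^ (p - k) * qbinom u ((m : ℤ) + ((p - k : ℕ) : ℤ) - 1) (p - k))) p]
  rw [← Finset.sum_add_distrib]
  apply Finset.sum_eq_zero
  intro k hk
  rw [Finset.mem_range] at hk
  rw [show p - (p - 1 - k) = k + 1 by omega, show 1 + k - 1 = k by omega,
    show p - (1 + k) = p - 1 - k by omega, show 1 + k = k + 1 by omega]
  ring
lemma main_generic (u : KK) (hu : u ≠ 0) (hq : ∀ j : ℕ, j ≠ 0 → qint u (j : ℤ) ≠ 0)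
    (m n : ℕ) (e : ℕ → KK)
    (hrec : ∀ p, n < p → e p = ∑ k ∈ Finset.Icc 1 p,
      (-1 : KK) ^ (k - 1) * e (p - k) * qbinom u ((m : ℤ) + (k : ℤ) - 1) k) :
    (∀ p, n + m < p → e p = 0) ∧
    Bpoly u m ∣ ∑ p ∈ Finset.range (m + n + 1), Polynomial.C (e p) * Polynomial.X ^ p := by
  set E := PowerSeries.mk e with hE
  set Q : Polynomial KK := ∑ p ∈ Finset.range (n + 1),
    Polynomial.C (PowerSeries.coeff p (E * Apow u m)) * Polynomial.X ^ p with hQdef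
  have hQcoeff : ∀ p, Q.coeff p
      = if p ≤ n then PowerSeries.coeff p (E * Apow u m) else 0 := by
    intro p
    rw [hQdef, Polynomial.finset_sum_coeff]
    simp only [Polynomial.coeff_C_mul, Polynomial.coeff_X_pow, mul_ite, mul_one, mul_zero]
    rw [Finset.sum_ite_eq (Finset.range (n + 1)) p]
    simp only [Finset.mem_range]
    by_cases h : p ≤ n
    · rw [if_pos (by omega), if_pos h]
    · rw [if_neg (by omega), if_neg h]
  have hQcoe : (Q : PowerSeries KK) = E * Apow u m := by
    ext p
    rw [Polynomial.coeff_coe, hQcoeff]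
    split_ifs with h
    · rfl
    · exact (coeff_EA u m n e hrec p (by omega)).symm
  have hEQ : ((Q * Bpoly u m : Polynomial KK) : PowerSeries KK) = E := by
    rw [Polynomial.coe_mul, hQcoe, mul_assoc, ABone u hu hq m, mul_one]
  have hco : ∀ p, (Q * Bpoly u m).coeff p = e p := by
    intro p
    have h := congrArg (PowerSeries.coeff p) hEQ
    rwa [Polynomial.coeff_coe, hE, PowerSeries.coeff_mk] at h
  have hdegQ : Q.natDegree ≤ n := by
    apply Polynomial.natDegree_sum_le_of_forall_le
    intro i hi
    exact le_trans (Polynomial.natDegree_C_mul_X_pow_le _ _)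
      (by rw [Finset.mem_range] at hi; omega)
  have hdegB : (Bpoly u m).natDegree ≤ m := by
    apply Polynomial.natDegree_sum_le_of_forall_le
    intro i hi
    exact le_trans (Polynomial.natDegree_C_mul_X_pow_le _ _)
      (by rw [Finset.mem_range] at hi; omega)
  have hdeg : (Q * Bpoly u m).natDegree ≤ n + m :=
    le_trans Polynomial.natDegree_mul_le (add_le_add hdegQ hdegB)
  have part1 : ∀ p, n + m < p → e p = 0 := by
    intro p hp
    rw [← hco p]
    exact Polynomial.coeff_eq_zero_of_natDegree_lt (lt_of_le_of_lt hdeg hp)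
  refine ⟨part1, ⟨Q, ?_⟩⟩
  have hmain : (∑ p ∈ Finset.range (m + n + 1), Polynomial.C (e p) * Polynomial.X ^ p)
      = Q * Bpoly u m := by
    apply Polynomial.ext
    intro p
    rw [Polynomial.finset_sum_coeff]
    simp only [Polynomial.coeff_C_mul, Polynomial.coeff_X_pow, mul_ite, mul_one, mul_zero]
    rw [Finset.sum_ite_eq (Finset.range (m + n + 1)) p]
    by_cases h : p ∈ Finset.range (m + n + 1)
    · rw [if_pos h, hco]
    · rw [if_neg h, hco]
      rw [Finset.mem_range, not_lt] at h
      exact (part1 p (by omega)).symm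
  rw [hmain]
  ring
lemma X_pow_ne_one (N : ℕ) (hN : N ≠ 0) : (RatFunc.X : KK) ^ N ≠ 1 := by
  intro h
  rw [← RatFunc.algebraMap_X, ← map_pow, ← map_one (algebraMap (Polynomial ℚ) KK)] at h
  have h2 := RatFunc.algebraMap_injective ℚ h
  have hdeg := congrArg Polynomial.natDegree h2
  rw [Polynomial.natDegree_X_pow, Polynomial.natDegree_one] at hdeg
  exact hN hdeg

lemma X_zpow_ne_one (k : ℤ) (hk : k ≠ 0) : (RatFunc.X : KK) ^ k ≠ 1 := by
  have hpos : ∀ j : ℤ, 0 < j → (RatFunc.X : KK) ^ j ≠ 1 := by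
    intro j hj h
    rw [← Int.toNat_of_nonneg hj.le, zpow_natCast] at h
    exact X_pow_ne_one j.toNat (by omega) h
  intro h
  rcases lt_or_gt_of_ne hk with hlt | hgt
  · exact hpos (-k) (by omega) (by rw [zpow_neg, h, inv_one])
  · exact hpos k hgt h

lemma qbinom_one_eq_zero (z : ℤ) (k : ℕ) (hk : k ≠ 0) : qbinom 1 z k = 0 := by
  unfold qbinom
  rw [Finset.prod_eq_zero (i := 0) (Finset.mem_range.2 (by omega))
    (by simp [qint, one_zpow]), zero_div]

/-- Proposition gen_recursion: if `e_p = ∑_{k=1}^p (-1)^{k-1} e_{p-k} [m+k-1 choose k]_w`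
for all `p > n` (with `w = v^d`), then `e_p = 0` for `p > n+m` and
`∑_{k=0}^m [m choose k]_w t^k` divides `∑_{p=0}^{m+n} e_p t^p`. -/
theorem gen_recursion (m n : ℕ) (d : ℤ) (e : ℕ → KK)
    (hrec : ∀ p, n < p →
      e p = ∑ k ∈ Finset.Icc 1 p,
        (-1 : KK) ^ (k - 1) * e (p - k) * qbinom (wvar ^ d) ((m : ℤ) + (k : ℤ) - 1) k) :
    (∀ p, n + m < p → e p = 0) ∧
    (∑ k ∈ Finset.range (m + 1),
        Polynomial.C (qbinom (wvar ^ d) (m : ℤ) k) * Polynomial.X ^ k) ∣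
      (∑ p ∈ Finset.range (m + n + 1), Polynomial.C (e p) * Polynomial.X ^ p) := by
  by_cases hd : d = 0
  · subst hd
    simp only [zpow_zero] at hrec ⊢
    have h0 : ∀ p, n < p → e p = 0 := by
      intro p hp
      rw [hrec p hp]
      apply Finset.sum_eq_zero
      intro k hk
      rw [Finset.mem_Icc] at hk
      rw [qbinom_one_eq_zero _ k (by omega), mul_zero]
    constructor
    · intro p hp; exact h0 p (by omega)
    · have hB : (∑ k ∈ Finset.range (m + 1),
          Polynomial.C (qbinom 1 (m : ℤ) k) * Polynomial.X ^ k) = 1 := by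
        rw [Finset.sum_eq_single 0]
        · simp [qbinom_zero_right]
        · intro k _ hk0
          rw [qbinom_one_eq_zero _ k hk0]
          simp
        · intro h; exact absurd (Finset.mem_range.2 (by omega)) h
      rw [hB]
      exact one_dvd _
  · set u : KK := wvar ^ d with hudef
    have hX : (RatFunc.X : KK) ≠ 0 := RatFunc.X_ne_zero
    have hu : u ≠ 0 := zpow_ne_zero d hX
    have hkey : ∀ z : ℤ, z ≠ 0 → u ^ z ≠ 1 := by
      intro z hz h
      apply X_zpow_ne_one (d * z) (mul_ne_zero hd hz)
      rw [zpow_mul]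
      exact h
    have hne : ∀ z : ℤ, z ≠ 0 → u ^ z - u ^ (-z) ≠ 0 := by
      intro z hz h
      rw [sub_eq_zero] at h
      apply hkey (2 * z) (by omega)
      calc u ^ (2 * z) = u ^ (z + z) := by ring_nf
        _ = u ^ z * u ^ z := zpow_add₀ hu z z
        _ = u ^ z * u ^ (-z) := by rw [← h]
        _ = u ^ (z + -z) := (zpow_add₀ hu z (-z)).symm
        _ = 1 := by rw [add_neg_cancel, zpow_zero]
    have hden : u - u⁻¹ ≠ 0 := by
      have h := hne 1 one_ne_zero
      rwa [zpow_one, zpow_neg, zpow_one] at h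
    have hq : ∀ j : ℕ, j ≠ 0 → qint u (j : ℤ) ≠ 0 := by
      intro j hj
      unfold qint
      exact div_ne_zero (hne (j : ℤ) (by omega)) hden
    exact main_generic u hu hq m n e hrec

end
end

section
/- Fix positive integers b, c. In the quantum torus T over Z[v^{±1}] generated by X_1^{±1}, X_2^{±1} with X_2 X_1 = v^2 X_1 X_2, define cluster variables X_m recursively by X_{m+1} X_{m-1} = v^b X_m^b + 1 for m odd and X_{m+1} X_{m-1} = v^c X_m^c + 1 for m even. Then for all m, the neighboring cluster variables quasi-commute: X_{m+1} X_m = v^2 X_m X_{m+1}. -/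
open Finset

noncomputable section

private lemma central_pow_comm {F : Type*} [DivisionRing F] [Algebra KK F]
    (s : KK) (t : F) (k : ℕ) :
    (algebraMap KK F s * t ^ k + 1) * t = t * (algebraMap KK F s * t ^ k + 1) := by
  have h : algebraMap KK F s * t = t * algebraMap KK F s := Algebra.commutes s t
  rw [add_mul, mul_add, one_mul, mul_one, mul_assoc, ← pow_succ, ← mul_assoc,
    ← h, mul_assoc, ← pow_succ']

private lemma stepF {F : Type*} [DivisionRing F] [Algebra KK F]
    (x y z P : F) (hx : x ≠ 0) (w : KK)
    (hP : P * y = y * P)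
    (hcomm : y * x = algebraMap KK F w * (x * y))
    (hz : z * x = P) :
    z * y = algebraMap KK F w * (y * z) := by
  set a := algebraMap KK F w with ha
  apply mul_right_cancel₀ hx
  calc z * y * x = z * (a * (x * y)) := by rw [mul_assoc, hcomm]
    _ = a * (z * x * y) := by
        rw [← mul_assoc, ← Algebra.commutes w z, ← ha, mul_assoc, mul_assoc]
    _ = a * (y * P) := by rw [hz, hP]
    _ = a * (y * z) * x := by rw [← hz, ← mul_assoc y z x, ← mul_assoc]

private lemma stepB {F : Type*} [DivisionRing F] [Algebra KK F]
    (x y z P : F) (hy : y ≠ 0) (w : KK)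
    (hP : P * x = x * P)
    (hcomm : y * x = algebraMap KK F w * (x * y))
    (hz : y * z = P) :
    x * z = algebraMap KK F w * (z * x) := by
  set a := algebraMap KK F w with ha
  apply mul_left_cancel₀ hy
  calc y * (x * z) = a * (x * y) * z := by rw [← mul_assoc, hcomm]
    _ = a * (P * x) := by rw [mul_assoc, mul_assoc, hz, hP]
    _ = a * (y * z * x) := by rw [hz]
    _ = y * (a * (z * x)) := by
        rw [mul_assoc y z x, ← mul_assoc a y, (Algebra.commutes w y : a * y = y * a), mul_assoc]

/-- Neighboring quantum cluster variables quasi-commute: `X_{m+1} X_m = v² X_m X_{m+1}`. -/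
theorem cluster_variables_quasi_commute (b c : ℕ) (hb : 0 < b) (hc : 0 < c)
    (F : Type*) [DivisionRing F] [Algebra KK F]
    (Xc : ℤ → F) (hne : ∀ m : ℤ, Xc m ≠ 0)
    (hbase : Xc 2 * Xc 1 = algebraMap KK F (wvar ^ 2) * (Xc 1 * Xc 2))
    (hex : ∀ m : ℤ, Xc (m + 1) * Xc (m - 1) =
      if Odd m then algebraMap KK F (wvar ^ b) * Xc m ^ b + 1
      else algebraMap KK F (wvar ^ c) * Xc m ^ c + 1) :
    ∀ m : ℤ, Xc (m + 1) * Xc m = algebraMap KK F (wvar ^ 2) * (Xc m * Xc (m + 1)) := by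
  set a := algebraMap KK F (wvar ^ 2) with ha
  have hPy : ∀ (s : KK) (k : ℕ) (m : ℤ),
      (if Odd m then algebraMap KK F (wvar ^ b) * Xc m ^ b + 1
        else algebraMap KK F (wvar ^ c) * Xc m ^ c + 1) * Xc m =
      Xc m * (if Odd m then algebraMap KK F (wvar ^ b) * Xc m ^ b + 1
        else algebraMap KK F (wvar ^ c) * Xc m ^ c + 1) := by
    intro _ _ m
    split_ifs <;> exact central_pow_comm _ _ _
  have hF : ∀ m : ℤ,
      Xc (m + 1) * Xc m = a * (Xc m * Xc (m + 1)) →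
      Xc (m + 1 + 1) * Xc (m + 1) = a * (Xc (m + 1) * Xc (m + 1 + 1)) := by
    intro m hm
    have he := hex (m + 1)
    rw [add_sub_cancel_right] at he
    exact stepF (Xc m) (Xc (m + 1)) (Xc (m + 1 + 1)) _ (hne m) (wvar ^ 2)
      (hPy wvar b (m + 1)) hm he
  have hB : ∀ m : ℤ,
      Xc (m + 1) * Xc m = a * (Xc m * Xc (m + 1)) →
      Xc (m - 1 + 1) * Xc (m - 1) = a * (Xc (m - 1) * Xc (m - 1 + 1)) := by
    intro m hm
    have he := hex m
    rw [sub_add_cancel]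
    exact stepB (Xc m) (Xc (m + 1)) (Xc (m - 1)) _ (hne (m + 1)) (wvar ^ 2)
      (hPy wvar b m) hm he
  have h1 : Xc (1 + 1) * Xc 1 = a * (Xc 1 * Xc (1 + 1)) := by
    norm_num
    exact hbase
  intro m
  induction m using Int.induction_on with
  | zero =>
      have h0 := hB 1 h1
      norm_num at h0 ⊢
      exact h0
  | succ i ih => exact hF i ih
  | pred i ih => exact hB (-i) ih

end
end

section
/- Fix positive integers b, c and positive integers a_1, a_2 with 0 < a_1 < b a_2 and 0 < a_2 < c a_1 (i.e., (a_1,a_2) is in case (6)). Let the coefficients ē(p,q) be defined by ē(0,0)=1 and the recurrence (<=, >): ē(p,q) = \sum_{k=1}^{p}(-1)^{k-1} ē(p-k,q) [[a_2-cq]_+ + k-1 choose k]_{v^b} if c a_1 q <= b a_2 p, and ē(p,q) = \sum_{l=1}^{q}(-1)^{l-1} ē(p,q-l) [[a_1-bp]_+ + l-1 choose l]_{v^c} if c a_1 q > b a_2 p. Then ē(p,q) = 0 whenever p >= a_1/b and q >= a_2/c; in particular only finitely many ē(p,q) are nonzero. -/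
open Finset

noncomputable section

namespace UQG
variable (u : KK)

lemma qint_zero : qint u 0 = 0 := by simp [qint]

lemma qint_neg (n : ℤ) : qint u (-n) = -qint u n := by
  simp only [qint, neg_neg]
  rw [← neg_div]; ring_nf

lemma qbinom_k0 (n : ℤ) : qbinom u n 0 = 1 := by simp [qbinom]

lemma qbinom_nat_lt (n k : ℕ) (h : n < k) : qbinom u (n : ℤ) k = 0 := by
  have : (∏ i ∈ Finset.range k, qint u ((n : ℤ) - i)) = 0 := by
    apply Finset.prod_eq_zero (Finset.mem_range.2 h)
    simp [qint_zero]
  simp [qbinom, this]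

lemma qbinom_neg (m k : ℕ) : qbinom u (-(m:ℤ)) k = (-1)^k * qbinom u ((m:ℤ)+k-1) k := by
  have hnum : (∏ i ∈ Finset.range k, qint u (-(m:ℤ) - i))
      = (-1)^k * ∏ i ∈ Finset.range k, qint u ((m:ℤ)+k-1 - i) := by
    calc (∏ i ∈ Finset.range k, qint u (-(m:ℤ) - i))
        = ∏ i ∈ Finset.range k, ((-1) * qint u ((m:ℤ) + i)) := by
          apply Finset.prod_congr rfl
          intro i _
          have : (-(m:ℤ) - i) = -((m:ℤ) + i) := by ring
          rw [this, qint_neg]; ring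
      _ = (-1)^k * ∏ i ∈ Finset.range k, qint u ((m:ℤ) + i) := by
          rw [Finset.prod_mul_distrib, Finset.prod_const, Finset.card_range]
      _ = (-1)^k * ∏ i ∈ Finset.range k, qint u ((m:ℤ)+k-1 - i) := by
          congr 1
          rw [← Finset.prod_range_reflect (fun i => qint u ((m:ℤ)+k-1 - i)) k]
          apply Finset.prod_congr rfl
          intro i hi
          rw [Finset.mem_range] at hi
          congr 1
          have : ((k - 1 - i : ℕ) : ℤ) = (k:ℤ) - 1 - i := by omega
          rw [this]; ring
  rw [qbinom, qbinom, hnum, mul_div_assoc]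


variable {u}
variable (hu : ∀ j : ℕ, 1 ≤ j → qint u (j : ℤ) ≠ 0)

include hu in
lemma u_ne_zero : u ≠ 0 := by
  intro h
  apply hu 1 le_rfl
  simp [qint, h]

include hu in
lemma atom1 (n : ℤ) (k : ℤ) : qint u n = u^(-k) * qint u (n - k) + u^(n - k) * qint u (k) := by
  have h0 : u ≠ 0 := u_ne_zero hu
  simp only [qint]
  rw [← mul_div_assoc, ← mul_div_assoc, ← add_div]
  congr 1
  rw [mul_sub, mul_sub, ← zpow_add₀ h0, ← zpow_add₀ h0, ← zpow_add₀ h0, ← zpow_add₀ h0]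
  ring_nf

include hu in
lemma atom2 (n : ℤ) (k : ℤ) : qint u n = u^(k) * qint u (n - k) + u^(k - n) * qint u (k) := by
  have h0 : u ≠ 0 := u_ne_zero hu
  simp only [qint]
  rw [← mul_div_assoc, ← mul_div_assoc, ← add_div]
  congr 1
  rw [mul_sub, mul_sub, ← zpow_add₀ h0, ← zpow_add₀ h0, ← zpow_add₀ h0, ← zpow_add₀ h0]
  ring_nf

include hu in
lemma pascal_core (n : ℤ) (k : ℕ) (x y : KK)
    (hatom : qint u n = x * qint u (n - (k+1)) + y * qint u ((k:ℤ)+1)) :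
    qbinom u n (k+1) = x * qbinom u (n-1) (k+1) + y * qbinom u (n-1) k := by
  have hD : ∀ j : ℕ, (∏ i ∈ Finset.range j, qint u ((i : ℤ) + 1)) ≠ 0 := by
    intro j
    apply Finset.prod_ne_zero_iff.2
    intro i _
    have := hu (i+1) (by omega)
    simpa [Int.natCast_add] using this
  have hq : qint u ((k:ℤ)+1) ≠ 0 := by
    have := hu (k+1) (by omega)
    simpa [Int.natCast_add] using this
  -- numerators
  have hnum1 : (∏ i ∈ Finset.range (k+1), qint u (n - i))
      = qint u n * ∏ i ∈ Finset.range k, qint u ((n-1) - i) := by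
    rw [Finset.prod_range_succ' (fun i => qint u (n - i)) k]
    simp only [Nat.cast_zero, sub_zero, Nat.cast_add, Nat.cast_one]
    rw [mul_comm]
    congr 1
    apply Finset.prod_congr rfl
    intro i _
    congr 1
    push_cast
    ring
  have hnum2 : (∏ i ∈ Finset.range (k+1), qint u ((n-1) - i))
      = (∏ i ∈ Finset.range k, qint u ((n-1) - i)) * qint u (n - (k+1)) := by
    rw [Finset.prod_range_succ]
    congr 1
    congr 1
    push_cast
    ring
  have hden : (∏ i ∈ Finset.range (k+1), qint u ((i : ℤ) + 1))
      = (∏ i ∈ Finset.range k, qint u ((i : ℤ) + 1)) * qint u ((k:ℤ)+1) := by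
    rw [Finset.prod_range_succ]
  rw [qbinom, qbinom, qbinom, hnum1, hnum2, hden]
  rw [hatom]
  set N := ∏ i ∈ Finset.range k, qint u ((n-1) - i) with hN
  set D := ∏ i ∈ Finset.range k, qint u ((i : ℤ) + 1) with hDD
  set A := qint u (n - ((k:ℤ)+1)) with hA
  set Q := qint u ((k:ℤ)+1) with hQ
  have hD0 : D ≠ 0 := hD k
  field_simp

end UQG

namespace UQG
open PowerSeries
variable {u : KK}
variable (hu : ∀ j : ℕ, 1 ≤ j → qint u (j : ℤ) ≠ 0)

include hu in
lemma pascal1 (n : ℤ) (k : ℕ) : qbinom u n (k+1)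
    = u^(-((k:ℤ)+1)) * qbinom u (n-1) (k+1) + u^(n-((k:ℤ)+1)) * qbinom u (n-1) k := by
  apply pascal_core hu
  exact atom1 hu n ((k:ℤ)+1)

include hu in
lemma pascal2 (n : ℤ) (k : ℕ) : qbinom u n (k+1)
    = u^((k:ℤ)+1) * qbinom u (n-1) (k+1) + u^(((k:ℤ)+1)-n) * qbinom u (n-1) k := by
  apply pascal_core hu
  exact atom2 hu n ((k:ℤ)+1)

variable (u) in
def Pser (m : ℕ) : PowerSeries KK := PowerSeries.mk fun k => qbinom u (m:ℤ) k
variable (u) in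
def Qser (m : ℕ) : PowerSeries KK := PowerSeries.mk fun k => qbinom u (-(m:ℤ)) k

lemma coeff_one_add_CX (a : KK) (f : PowerSeries KK) (n : ℕ) :
    (PowerSeries.coeff (n+1)) ((1 + PowerSeries.C a * PowerSeries.X) * f)
      = (PowerSeries.coeff (n+1)) f + a * (PowerSeries.coeff n) f := by
  have : (1 + PowerSeries.C a * PowerSeries.X) * f
      = f + PowerSeries.C a * (PowerSeries.X * f) := by ring
  rw [this, map_add, PowerSeries.coeff_C_mul, PowerSeries.coeff_succ_X_mul]

lemma coeff_zero_one_add_CX (a : KK) (f : PowerSeries KK) :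
    (PowerSeries.coeff 0) ((1 + PowerSeries.C a * PowerSeries.X) * f)
      = (PowerSeries.coeff 0) f := by
  have : (1 + PowerSeries.C a * PowerSeries.X) * f
      = f + PowerSeries.C a * (PowerSeries.X * f) := by ring
  rw [this, map_add, PowerSeries.coeff_C_mul, PowerSeries.coeff_zero_X_mul, mul_zero, add_zero]

include hu in
lemma stepA (m : ℕ) : Pser u (m+1)
    = (1 + PowerSeries.C (u^(m:ℤ)) * PowerSeries.X) * (PowerSeries.rescale u⁻¹ (Pser u m)) := by
  have h0 : u ≠ 0 := u_ne_zero hu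
  ext n
  cases n with
  | zero =>
      rw [coeff_zero_one_add_CX, PowerSeries.coeff_rescale]
      simp [Pser, qbinom]
  | succ k =>
      rw [coeff_one_add_CX, PowerSeries.coeff_rescale, PowerSeries.coeff_rescale]
      simp only [Pser, PowerSeries.coeff_mk]
      have hp := pascal1 hu ((m:ℤ)+1) k
      have e1 : ((m:ℤ)+1-1) = (m:ℤ) := by ring
      rw [e1] at hp
      have e2 : ((m+1:ℕ):ℤ) = (m:ℤ)+1 := by push_cast; ring
      have e3 : u⁻¹^(k+1) = u^(-((k:ℤ)+1)) := by
        rw [inv_pow, ← zpow_natCast u (k+1), ← zpow_neg]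
        norm_cast
      have e4 : u^((m:ℤ)+1-((k:ℤ)+1)) = u^(m:ℤ) * u⁻¹^k := by
        rw [inv_pow, ← zpow_natCast u k, ← zpow_neg, ← zpow_add₀ h0]
        congr 1
        push_cast
        ring
      rw [e2, hp, ← e3, e4]
      ring

include hu in
lemma stepB (m : ℕ) : PowerSeries.rescale u⁻¹ (Qser u m)
    = (1 + PowerSeries.C (u^(m:ℤ)) * PowerSeries.X) * Qser u (m+1) := by
  have h0 : u ≠ 0 := u_ne_zero hu
  ext n
  cases n with
  | zero =>
      rw [PowerSeries.coeff_rescale, coeff_zero_one_add_CX]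
      simp [Qser, qbinom]
  | succ k =>
      rw [PowerSeries.coeff_rescale, coeff_one_add_CX]
      simp only [Qser, PowerSeries.coeff_mk]
      have hp := pascal2 hu (-(m:ℤ)) k
      have em : (-(m:ℤ) - 1) = -((m+1:ℕ):ℤ) := by push_cast; ring
      rw [em] at hp
      rw [hp]
      have e3 : u⁻¹^(k+1) = u^(-((k:ℤ)+1)) := by
        rw [inv_pow, ← zpow_natCast u (k+1), ← zpow_neg]
        norm_cast
      rw [e3, mul_add, ← mul_assoc, ← mul_assoc, ← zpow_add₀ h0, ← zpow_add₀ h0]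
      have f1 : (-((k:ℤ)+1)) + ((k:ℤ)+1) = 0 := by ring
      have f2 : (-((k:ℤ)+1)) + (((k:ℤ)+1) - (-(m:ℤ))) = (m:ℤ) := by ring
      rw [f1, f2, zpow_zero, one_mul]

lemma Pser_zero : Pser u 0 = 1 := by
  ext n
  cases n with
  | zero => simp [Pser, qbinom]
  | succ k =>
      rw [PowerSeries.coeff_one]
      simp only [Pser, PowerSeries.coeff_mk, Nat.cast_zero, if_neg (Nat.succ_ne_zero k)]
      exact_mod_cast qbinom_nat_lt u 0 (k+1) (by omega)

lemma Qser_zero : Qser u 0 = 1 := by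
  have : Qser u 0 = Pser u 0 := by
    simp only [Qser, Pser, Nat.cast_zero, neg_zero]
  rw [this, Pser_zero]

include hu in
lemma PQ_one (m : ℕ) : Pser u m * Qser u m = 1 := by
  induction m with
  | zero => rw [Pser_zero, Qser_zero, one_mul]
  | succ m ih =>
      have := congrArg (PowerSeries.rescale u⁻¹) ih
      rw [map_mul, map_one] at this
      calc Pser u (m+1) * Qser u (m+1)
          = (PowerSeries.rescale u⁻¹ (Pser u m)) *
              ((1 + PowerSeries.C (u^(m:ℤ)) * PowerSeries.X) * Qser u (m+1)) := by
            rw [stepA hu m]; ring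
        _ = (PowerSeries.rescale u⁻¹ (Pser u m)) * (PowerSeries.rescale u⁻¹ (Qser u m)) := by
            rw [← stepB hu m]
        _ = 1 := this

include hu in
lemma coeff_FQ_zero (m p1 : ℕ) (f : ℕ → KK)
    (hf : ∀ p, p1 ≤ p → f p = ∑ k ∈ Finset.Icc 1 p,
        (-1:KK)^(k-1) * f (p-k) * qbinom u ((m:ℤ) + k - 1) k)
    (p : ℕ) (hp : p1 ≤ p) :
    (PowerSeries.coeff p) (PowerSeries.mk f * Qser u m) = 0 := by
  rw [PowerSeries.coeff_mul, Finset.Nat.sum_antidiagonal_eq_sum_range_succ_mk]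
  simp only [PowerSeries.coeff_mk, Qser]
  -- reflect the sum
  have hrefl : ∑ k ∈ Finset.range (p+1), f k * qbinom u (-(m:ℤ)) (p - k)
      = ∑ k ∈ Finset.range (p+1), qbinom u (-(m:ℤ)) k * f (p - k) := by
    rw [← Finset.sum_range_reflect (fun k => qbinom u (-(m:ℤ)) k * f (p - k)) (p+1)]
    apply Finset.sum_congr rfl
    intro j hj
    rw [Finset.mem_range] at hj
    have h1 : p + 1 - 1 - j = p - j := by omega
    have h2 : p - (p - j) = j := by omega
    rw [h1, h2, mul_comm]
  rw [hrefl, Finset.sum_range_succ' (fun k => qbinom u (-(m:ℤ)) k * f (p - k)) p]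
  have hz : (qbinom u (-(m:ℤ)) 0 * f (p - 0)) = f p := by
    rw [qbinom_k0]; simp
  rw [hz]
  have hmain : ∑ i ∈ Finset.range p, qbinom u (-(m:ℤ)) (i+1) * f (p - (i+1)) = - f p := by
    have hfp := hf p hp
    have hicc : ∑ k ∈ Finset.Icc 1 p, (-1:KK)^(k-1) * f (p-k) * qbinom u ((m:ℤ) + k - 1) k
        = ∑ i ∈ Finset.range p, (-1:KK)^i * f (p-(1+i)) * qbinom u ((m:ℤ) + (1+i) - 1) (1+i) := by
      rw [← Finset.Ico_add_one_right_eq_Icc, Finset.sum_Ico_eq_sum_range]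
      simp only [Nat.add_sub_cancel, Nat.succ_sub_one]
      apply Finset.sum_congr rfl
      intro i _
      have : (1 + i) - 1 = i := by omega
      rw [this]
      push_cast
      ring_nf
    rw [hicc] at hfp
    rw [hfp, ← Finset.sum_neg_distrib]
    apply Finset.sum_congr rfl
    intro i _
    rw [qbinom_neg]
    have e1 : ((m:ℤ) + ((i+1:ℕ):ℤ) - 1) = (m:ℤ) + (1+(i:ℤ)) - 1 := by push_cast; ring
    have e2 : (i + 1 : ℕ) = 1 + i := by omega
    rw [e1, e2]
    push_cast
    ring
  rw [hmain]
  ring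

include hu in
lemma vanish (m p1 : ℕ) (f : ℕ → KK)
    (hf : ∀ p, p1 ≤ p → f p = ∑ k ∈ Finset.Icc 1 p,
        (-1:KK)^(k-1) * f (p-k) * qbinom u ((m:ℤ) + k - 1) k) :
    ∀ p, p1 + m ≤ p → f p = 0 := by
  intro p hp
  have hFQM : PowerSeries.mk f = (PowerSeries.mk f * Qser u m) * Pser u m := by
    rw [mul_assoc, mul_comm (Qser u m), PQ_one hu, mul_one]
  have : f p = (PowerSeries.coeff p) ((PowerSeries.mk f * Qser u m) * Pser u m) := by
    rw [← hFQM, PowerSeries.coeff_mk]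
  rw [this, PowerSeries.coeff_mul, Finset.Nat.sum_antidiagonal_eq_sum_range_succ_mk]
  apply Finset.sum_eq_zero
  intro k hk
  rw [Finset.mem_range] at hk
  by_cases hkp : p1 ≤ k
  · rw [coeff_FQ_zero hu m p1 f hf k hkp, zero_mul]
  · have hlt : m < p - k := by omega
    simp only [Pser, PowerSeries.coeff_mk]
    rw [qbinom_nat_lt u m (p - k) hlt, mul_zero]

lemma wpow_ne_one (n : ℕ) (hn : 0 < n) : (wvar : KK)^n ≠ 1 := by
  intro h
  have hX : (Polynomial.X : Polynomial ℚ)^n = 1 := by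
    apply RatFunc.algebraMap_injective ℚ
    rw [map_pow, map_one, RatFunc.algebraMap_X]
    exact h
  have := congrArg Polynomial.natDegree hX
  rw [Polynomial.natDegree_X_pow, Polynomial.natDegree_one] at this
  omega

lemma hu_wvar (b : ℕ) (hb : 0 < b) : ∀ j : ℕ, 1 ≤ j → qint ((wvar : KK)^b) (j:ℤ) ≠ 0 := by
  intro j hj
  set u : KK := wvar^b with hudef
  have hX0 : (wvar : KK) ≠ 0 := RatFunc.X_ne_zero
  have hu0 : u ≠ 0 := pow_ne_zero _ hX0
  have hpow : ∀ n : ℕ, 0 < n → u^n ≠ 1 := by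
    intro n hn h
    rw [hudef, ← pow_mul] at h
    exact wpow_ne_one (b*n) (by positivity) h
  have hnum : u^(j:ℤ) - u^(-(j:ℤ)) ≠ 0 := by
    rw [sub_ne_zero]
    intro h
    have h2 : u^((2*j : ℕ) : ℤ) = 1 := by
      push_cast
      rw [two_mul, zpow_add₀ hu0]
      nth_rewrite 1 [h]
      rw [← zpow_add₀ hu0]
      simp
    rw [zpow_natCast] at h2
    exact hpow (2*j) (by omega) h2
  have hden : u - u⁻¹ ≠ 0 := by
    rw [sub_ne_zero]
    intro h
    have h2 : u^(2:ℕ) = 1 := by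
      rw [pow_two]
      nth_rewrite 2 [h]
      exact mul_inv_cancel₀ hu0
    exact hpow 2 (by omega) h2
  exact div_ne_zero hnum hden

end UQG

set_option maxHeartbeats 1600000 in
/-- For an imaginary `(a_1,a_2)` (case (6)), the coefficients `ē(p,q)` defined by the
`(≤, >)` recurrence vanish when `p ≥ a_1/b` and `q ≥ a_2/c`; in particular only
finitely many of them are nonzero. -/
theorem upper_quasi_greedy_finite_support (b c : ℕ) (hb : 0 < b) (hc : 0 < c)
    (a1 a2 : ℤ) (h1 : 0 < a1) (h1' : a1 < b * a2) (h2 : 0 < a2) (h2' : a2 < c * a1)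
    (e : ℕ → ℕ → KK) (h00 : e 0 0 = 1)
    (hrec1 : ∀ p q : ℕ, (p, q) ≠ (0, 0) → (c : ℤ) * a1 * q ≤ (b : ℤ) * a2 * p →
      e p q = ∑ k ∈ Finset.Icc 1 p, (-1 : KK) ^ (k - 1) * e (p - k) q *
        qbinom (wvar ^ b) (max (a2 - c * q) 0 + (k : ℤ) - 1) k)
    (hrec2 : ∀ p q : ℕ, (p, q) ≠ (0, 0) → (b : ℤ) * a2 * p < (c : ℤ) * a1 * q →
      e p q = ∑ l ∈ Finset.Icc 1 q, (-1 : KK) ^ (l - 1) * e p (q - l) *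
        qbinom (wvar ^ c) (max (a1 - b * p) 0 + (l : ℤ) - 1) l) :
    (∀ p q : ℕ, a1 ≤ b * p → a2 ≤ c * q → e p q = 0) ∧
    {pq : ℕ × ℕ | e pq.1 pq.2 ≠ 0}.Finite := by
  have hb1 : (1:ℤ) ≤ b := by exact_mod_cast hb
  have hc1 : (1:ℤ) ≤ c := by exact_mod_cast hc
  -- Part 1 : vanishing on the region
  have regionA : ∀ p q : ℕ, a1 ≤ b * p → a2 ≤ c * q → e p q = 0 := by
    intro p q hp hq
    have hp1 : 1 ≤ p := by
      by_contra h
      have : p = 0 := by omega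
      subst this
      simp only [Nat.cast_zero, mul_zero] at hp
      omega
    have hq1 : 1 ≤ q := by
      by_contra h
      have : q = 0 := by omega
      subst this
      simp only [Nat.cast_zero, mul_zero] at hq
      omega
    have hne : (p, q) ≠ (0, 0) := by
      simp only [ne_eq, Prod.mk.injEq, not_and]
      omega
    rcases le_or_gt ((c:ℤ) * a1 * q) ((b:ℤ) * a2 * p) with hcase | hcase
    · rw [hrec1 p q hne hcase]
      apply Finset.sum_eq_zero
      intro k hk
      rw [Finset.mem_Icc] at hk
      have hmax : max (a2 - (c:ℤ) * q) 0 = 0 := max_eq_right (by omega)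
      have harg : max (a2 - (c:ℤ) * q) 0 + (k:ℤ) - 1 = ((k - 1 : ℕ) : ℤ) := by
        rw [hmax]; omega
      rw [harg, UQG.qbinom_nat_lt _ (k-1) k (by omega), mul_zero]
    · rw [hrec2 p q hne hcase]
      apply Finset.sum_eq_zero
      intro l hl
      rw [Finset.mem_Icc] at hl
      have hmax : max (a1 - (b:ℤ) * p) 0 = 0 := max_eq_right (by omega)
      have harg : max (a1 - (b:ℤ) * p) 0 + (l:ℤ) - 1 = ((l - 1 : ℕ) : ℤ) := by
        rw [hmax]; omega
      rw [harg, UQG.qbinom_nat_lt _ (l-1) l (by omega), mul_zero]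
  refine ⟨regionA, ?_⟩
  -- Strip 1 : fixed q with c*q < a2
  have strip1 : ∀ q : ℕ, (c:ℤ) * q < a2 →
      ∀ p : ℕ, ((c:ℤ) * a1 * q).toNat + 1 + (a2 - (c:ℤ) * q).toNat ≤ p → e p q = 0 := by
    intro q hq
    apply UQG.vanish (UQG.hu_wvar b hb) ((a2 - (c:ℤ) * q).toNat) (((c:ℤ) * a1 * q).toNat + 1)
      (fun p => e p q)
    intro p hp
    have hq0 : (0:ℤ) ≤ (c:ℤ) * a1 * q :=
      mul_nonneg (mul_nonneg (by positivity) h1.le) (by positivity)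
    have hpz : ((c:ℤ) * a1 * q) < (p:ℤ) := by
      have h1' : ((c:ℤ) * a1 * q) ≤ (((c:ℤ) * a1 * q).toNat : ℤ) := Int.self_le_toNat _
      have h2' : ((((c:ℤ) * a1 * q).toNat + 1 : ℕ) : ℤ) ≤ (p:ℤ) := by exact_mod_cast hp
      push_cast at h2'
      omega
    have hne : (p, q) ≠ (0, 0) := by
      simp only [ne_eq, Prod.mk.injEq, not_and]
      intro hp0
      omega
    have hle : (c:ℤ) * a1 * q ≤ (b:ℤ) * a2 * p := by
      have h3 : (p:ℤ) ≤ (b:ℤ) * a2 * p := by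
        have : (0:ℤ) ≤ ((b:ℤ) * a2 - 1) * p := by
          apply mul_nonneg _ (by positivity)
          nlinarith
        nlinarith
      omega
    have hpos : (0:ℤ) < a2 - (c:ℤ) * q := by omega
    have hmax : max (a2 - (c:ℤ) * q) 0 + (1:ℤ) = (((a2 - (c:ℤ) * q).toNat : ℕ) : ℤ) + 1 := by
      rw [max_eq_left hpos.le, Int.toNat_of_nonneg hpos.le]
    rw [hrec1 p q hne hle]
    apply Finset.sum_congr rfl
    intro k hk
    congr 2
    rw [max_eq_left hpos.le, Int.toNat_of_nonneg hpos.le]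
  -- Strip 2 : fixed p with b*p < a1
  have strip2 : ∀ p : ℕ, (b:ℤ) * p < a1 →
      ∀ q : ℕ, ((b:ℤ) * a2 * p).toNat + 1 + (a1 - (b:ℤ) * p).toNat ≤ q → e p q = 0 := by
    intro p hpl
    apply UQG.vanish (UQG.hu_wvar c hc) ((a1 - (b:ℤ) * p).toNat) (((b:ℤ) * a2 * p).toNat + 1)
      (fun q => e p q)
    intro q hq
    have hq0 : (0:ℤ) ≤ (b:ℤ) * a2 * p :=
      mul_nonneg (mul_nonneg (by positivity) h2.le) (by positivity)
    have hpz : ((b:ℤ) * a2 * p) < (q:ℤ) := by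
      have ha : ((b:ℤ) * a2 * p) ≤ (((b:ℤ) * a2 * p).toNat : ℤ) := Int.self_le_toNat _
      have hbq : ((((b:ℤ) * a2 * p).toNat + 1 : ℕ) : ℤ) ≤ (q:ℤ) := by exact_mod_cast hq
      push_cast at hbq
      omega
    have hne : (p, q) ≠ (0, 0) := by
      simp only [ne_eq, Prod.mk.injEq, not_and']
      intro hq0'
      omega
    have hlt : (b:ℤ) * a2 * p < (c:ℤ) * a1 * q := by
      have h3 : (q:ℤ) ≤ (c:ℤ) * a1 * q := by
        have : (0:ℤ) ≤ ((c:ℤ) * a1 - 1) * q := by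
          apply mul_nonneg _ (by positivity)
          nlinarith
        nlinarith
      omega
    have hpos : (0:ℤ) < a1 - (b:ℤ) * p := by omega
    rw [hrec2 p q hne hlt]
    apply Finset.sum_congr rfl
    intro l hl
    congr 2
    rw [max_eq_left hpos.le, Int.toNat_of_nonneg hpos.le]
  -- Finiteness
  set P : ℕ := ((c:ℤ) * a1 * a2).toNat + 1 + a2.toNat with hP
  set Q : ℕ := ((b:ℤ) * a2 * a1).toNat + 1 + a1.toNat with hQ
  have key : ∀ p q : ℕ, P ≤ p ∨ Q ≤ q → e p q = 0 := by
    intro p q h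
    rcases h with h | h
    · have hpP : ((((c:ℤ) * a1 * a2).toNat + 1 + a2.toNat : ℕ) : ℤ) ≤ (p:ℤ) := by
        exact_mod_cast h
      push_cast at hpP
      have hca : ((c:ℤ) * a1 * a2) ≤ (((c:ℤ) * a1 * a2).toNat : ℤ) := Int.self_le_toNat _
      by_cases hcq : a2 ≤ (c:ℤ) * q
      · apply regionA p q _ hcq
        have hca1 : a1 ≤ (c:ℤ) * a1 * a2 := by nlinarith
        have hbp : (p:ℤ) ≤ (b:ℤ) * p := by nlinarith [Int.natCast_nonneg p]
        omega
      · push_neg at hcq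
        apply strip1 q hcq p
        have hcq0 : (0:ℤ) ≤ (c:ℤ) * q := by positivity
        have hqa2 : (q:ℤ) ≤ a2 := by nlinarith [Int.natCast_nonneg q]
        have hm1 : ((c:ℤ) * a1 * q).toNat ≤ ((c:ℤ) * a1 * a2).toNat := by
          apply Int.toNat_le_toNat
          have : (0:ℤ) ≤ (c:ℤ) * a1 := by positivity
          nlinarith
        have hm2 : (a2 - (c:ℤ) * q).toNat ≤ a2.toNat := by
          apply Int.toNat_le_toNat
          omega
        omega
    · have hqQ : ((((b:ℤ) * a2 * a1).toNat + 1 + a1.toNat : ℕ) : ℤ) ≤ (q:ℤ) := by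
        exact_mod_cast h
      push_cast at hqQ
      have hba : ((b:ℤ) * a2 * a1) ≤ (((b:ℤ) * a2 * a1).toNat : ℤ) := Int.self_le_toNat _
      by_cases hbp : a1 ≤ (b:ℤ) * p
      · apply regionA p q hbp
        have hba1 : a2 ≤ (b:ℤ) * a2 * a1 := by nlinarith
        have hcq : (q:ℤ) ≤ (c:ℤ) * q := by nlinarith [Int.natCast_nonneg q]
        omega
      · push_neg at hbp
        apply strip2 p hbp q
        have hbp0 : (0:ℤ) ≤ (b:ℤ) * p := by positivity
        have hpa1 : (p:ℤ) ≤ a1 := by nlinarith [Int.natCast_nonneg p]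
        have hm1 : ((b:ℤ) * a2 * p).toNat ≤ ((b:ℤ) * a2 * a1).toNat := by
          apply Int.toNat_le_toNat
          have : (0:ℤ) ≤ (b:ℤ) * a2 := by positivity
          nlinarith
        have hm2 : (a1 - (b:ℤ) * p).toNat ≤ a1.toNat := by
          apply Int.toNat_le_toNat
          omega
        omega
  apply Set.Finite.subset ((Finset.range P ×ˢ Finset.range Q).finite_toSet)
  intro pq hpq
  simp only [Finset.coe_product, Set.mem_prod, Finset.mem_coe, Finset.mem_range]
  constructor
  · by_contra hcon
    exact hpq (key pq.1 pq.2 (Or.inl (le_of_not_gt hcon)))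
  · by_contra hcon
    exact hpq (key pq.1 pq.2 (Or.inr (le_of_not_gt hcon)))


end
end
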